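/- Let d, r ≥ 1, let w_1, …, w_r ∈ ℝ^d, and let Γ ⊂ ℝ^d be a finite set such that for every γ ∈ Γ there exists an index r₀ ∈ {1, …, r} with γ · w_i = 0 for all i < r₀ and γ · w_{r₀} > 0, where · denotes the standard inner product on ℝ^d. Then there exists ε₀ > 0 such that for every ε with 0 < ε < ε₀ and every γ ∈ Γ one has γ · (w_1 + ε w_2 + ε² w_3 + ⋯ + ε^{r−1} w_r) > 0. -/
import Mathlib


/-- let `d, r ≥ 1`, `w_1, …, w_r ∈ ℝ^d`, and `Γ ⊂ ℝ^d` a finite set such that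
every `γ ∈ Γ` is lexicographically positive against the `w_i` (there is `r₀` with
`γ · w_i = 0` for `i < r₀` and `γ · w_{r₀} > 0`).  Then there is `ε₀ > 0` such that for
all `0 < ε < ε₀` and all `γ ∈ Γ`, `γ · (w_1 + ε w_2 + ⋯ + ε^{r−1} w_r) > 0`. -/
theorem lex_positive_perturbation
    (d r : ℕ) (hd : 1 ≤ d) (hr : 1 ≤ r)
    (w : Fin r → Fin d → ℝ) (Γ : Finset (Fin d → ℝ))
    (h : ∀ γ ∈ Γ, ∃ r₀ : Fin r,
      (∀ i : Fin r, i < r₀ → ∑ k, γ k * w i k = 0) ∧ 0 < ∑ k, γ k * w r₀ k) :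
    ∃ ε₀ > (0 : ℝ), ∀ ε : ℝ, 0 < ε → ε < ε₀ → ∀ γ ∈ Γ,
      0 < ∑ k, γ k * (∑ j : Fin r, ε ^ (j : ℕ) * w j k) := by
  have key : ∀ γ ∈ Γ, ∀ᶠ ε in nhdsWithin (0:ℝ) (Set.Ioi 0),
      0 < ∑ k, γ k * (∑ j : Fin r, ε ^ (j : ℕ) * w j k) := by
    intro γ hγ
    obtain ⟨r₀, hz, hp⟩ := h γ hγ
    set c : Fin r → ℝ := fun j => ∑ k, γ k * w j k with hc
    have hsum : ∀ ε : ℝ, ∑ k, γ k * (∑ j : Fin r, ε ^ (j : ℕ) * w j k)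
        = ∑ j : Fin r, ε ^ (j : ℕ) * c j := by
      intro ε
      simp_rw [hc, Finset.mul_sum]
      rw [Finset.sum_comm]
      refine Finset.sum_congr rfl fun j _ => Finset.sum_congr rfl fun k _ => by ring
    set g : ℝ → ℝ := fun ε => ∑ j : Fin r, ε ^ ((j : ℕ) - (r₀ : ℕ)) * c j with hg
    have hg0 : g 0 = c r₀ := by
      show (∑ j : Fin r, (0:ℝ) ^ ((j : ℕ) - (r₀ : ℕ)) * c j) = c r₀
      rw [Finset.sum_eq_single r₀]
      · simp
      · intro j _ hj
        rcases lt_or_gt_of_ne hj with h1 | h1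
        · rw [show c j = 0 from hz j h1, mul_zero]
        · rw [zero_pow (by have := Fin.lt_def.mp h1; omega), zero_mul]
      · simp
    have hcont : Continuous g := by
      apply continuous_finset_sum
      intro j _
      exact (continuous_pow _).mul continuous_const
    have hev : ∀ᶠ ε in nhds (0:ℝ), 0 < g ε :=
      (hcont.tendsto 0).eventually (eventually_gt_nhds (hg0 ▸ hp))
    filter_upwards [hev.filter_mono nhdsWithin_le_nhds, self_mem_nhdsWithin]
      with ε hgε hε
    rw [hsum ε]
    have hfac : ∑ j : Fin r, ε ^ (j : ℕ) * c j = ε ^ (r₀ : ℕ) * g ε := by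
      rw [hg, Finset.mul_sum]
      refine Finset.sum_congr rfl fun j _ => ?_
      by_cases hj : (j : ℕ) < (r₀ : ℕ)
      · rw [show c j = 0 from hz j (Fin.lt_def.mpr hj), mul_zero, mul_zero, mul_zero]
      · rw [← mul_assoc, ← pow_add]
        congr 2
        omega
    rw [hfac]
    exact mul_pos (pow_pos hε _) hgε
  have hall : ∀ᶠ ε in nhdsWithin (0:ℝ) (Set.Ioi 0), ∀ γ ∈ Γ,
      0 < ∑ k, γ k * (∑ j : Fin r, ε ^ (j : ℕ) * w j k) :=
    (Filter.eventually_all_finset Γ).2 key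
  obtain ⟨u, hu, hsub⟩ := mem_nhdsGT_iff_exists_Ioo_subset.mp hall
  exact ⟨u, hu, fun ε hε hε' γ hγ => hsub ⟨hε, hε'⟩ γ hγ⟩
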